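/- If k is even, then 0 is a root of Q_{L(4,k)} of multiplicity at least 2, and writing Q_{L(4,k)}(X) = X²·R(X), we have R(0) = (−1)^{k/2+1}·(k+4). -/

import Mathlib

open Polynomial

/-- The characteristic polynomial (over `ℝ`) of the adjacency matrix of a finite graph. -/
noncomputable def graphCharpoly {V : Type*} [Fintype V] [DecidableEq V]
    (G : SimpleGraph V) : Polynomial ℝ :=
  letI := Classical.decRel G.Adj
  (G.adjMatrix ℝ).charpoly

/-- `Q_{P_n}`: the characteristic polynomial of the path on `n` vertices. -/
noncomputable def Qpath (n : ℕ) : Polynomial ℝ := graphCharpoly (SimpleGraph.pathGraph n)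

/-- `Q_{C_n}`: the characteristic polynomial of the cycle on `n` vertices. -/
noncomputable def Qcycle (n : ℕ) : Polynomial ℝ := graphCharpoly (SimpleGraph.cycleGraph n)

/-- The lollipop `L(p,k)`: a cycle on `p` vertices with a path of `k` further
vertices attached to one cycle vertex. -/
def lollipop (p k : ℕ) : SimpleGraph (Fin p ⊕ Fin k) :=
  SimpleGraph.fromRel (fun a b =>
    match a, b with
    | Sum.inl i, Sum.inl j => ((i : ℕ) + 1) % p = (j : ℕ)
    | Sum.inl i, Sum.inr j => (i : ℕ) = 0 ∧ (j : ℕ) = 0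
    | Sum.inr i, Sum.inr j => (i : ℕ) + 1 = (j : ℕ)
    | _, _ => False)

/-! ### Auxiliary matrices for the lollipop `L(4,k)` relabelled on `Fin (k+4)` -/

/-- Entries of the char-matrix of the relabelled lollipop: vertices `0,1,2,3` form the
cycle (with chord `0–3`), and `3,4,5,…` the path hanging off vertex `3`. -/
noncomputable def LollipopAux.ent (i j : ℕ) : Polynomial ℝ :=
  if i = j then X
  else if i+1 = j ∨ j+1 = i ∨ (i = 0 ∧ j = 3) ∨ (i = 3 ∧ j = 0) then -1 else 0

/-- The charmatrix of the relabelled lollipop on `n` vertices. -/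
noncomputable def LollipopAux.Bm (n : ℕ) : Matrix (Fin n) (Fin n) (Polynomial ℝ) :=
  Matrix.of fun i j => LollipopAux.ent i j

/-- The characteristic polynomial of the relabelled lollipop on `n` vertices. -/
noncomputable def LollipopAux.D (n : ℕ) : Polynomial ℝ := (LollipopAux.Bm n).det

namespace LollipopAux

lemma ent_eq_zero {i j : ℕ} (h1 : i + 1 ≠ j) (h2 : j + 1 ≠ i) (h3 : i ≠ j)
    (h4 : ¬(i = 0 ∧ j = 3)) (h5 : ¬(i = 3 ∧ j = 0)) : ent i j = 0 := by
  rw [ent, if_neg h3, if_neg]; tauto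

lemma Bm_submatrix (m : ℕ) :
    (Bm (m+1)).submatrix Fin.castSucc Fin.castSucc = Bm m := by
  ext i j; rfl

lemma D_rec (n : ℕ) : D (n+6) = X * D (n+5) - D (n+4) := by
  have hlast : ((Fin.last (n+5) : Fin (n+6)) : ℕ) = n + 5 := rfl
  rw [D, Matrix.det_succ_row _ (Fin.last (n+5)), Fin.sum_univ_castSucc, Fin.sum_univ_castSucc]
  have hz : ∀ j : Fin (n+4),
      (-1:Polynomial ℝ) ^ ((Fin.last (n+5) : Fin (n+6)) + (Fin.castSucc (Fin.castSucc j)) : ℕ) *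
        Bm (n+6) (Fin.last (n+5)) (Fin.castSucc (Fin.castSucc j)) *
        Matrix.det ((Bm (n+6)).submatrix (Fin.last (n+5)).succAbove
          (Fin.castSucc (Fin.castSucc j)).succAbove) = 0 := by
    intro j
    have hj : ((Fin.castSucc (Fin.castSucc j) : Fin (n+6)) : ℕ) = (j : ℕ) := rfl
    have : Bm (n+6) (Fin.last (n+5)) (Fin.castSucc (Fin.castSucc j)) = 0 := by
      show ent (n+5) ((Fin.castSucc (Fin.castSucc j) : Fin (n+6)) : ℕ) = 0
      rw [hj]
      have := j.isLt
      apply ent_eq_zero <;> omega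
    rw [this]; ring
  rw [Finset.sum_eq_zero (fun j _ => hz j), zero_add]
  have hsA : (Fin.last (n+5)).succAbove = (Fin.castSucc : Fin (n+5) → Fin (n+6)) :=
    Fin.succAbove_last
  have hterm1 :
      (-1:Polynomial ℝ) ^ ((Fin.last (n+5) : Fin (n+6)) + (Fin.last (n+5) : Fin (n+6)) : ℕ) *
        Bm (n+6) (Fin.last (n+5)) (Fin.last (n+5)) *
        Matrix.det ((Bm (n+6)).submatrix (Fin.last (n+5)).succAbove
          (Fin.last (n+5)).succAbove) = X * D (n+5) := by
    have h1 : Bm (n+6) (Fin.last (n+5)) (Fin.last (n+5)) = X := by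
      show ent (n+5) (n+5) = X
      rw [ent, if_pos rfl]
    rw [h1, hsA, Bm_submatrix]
    have : (-1:Polynomial ℝ) ^ ((Fin.last (n+5) : Fin (n+6)) + (Fin.last (n+5) : Fin (n+6)) : ℕ) = 1 := by
      rw [hlast]; exact Even.neg_one_pow ⟨n+5, rfl⟩
    rw [this, one_mul, D]
  have hterm2 :
      (-1:Polynomial ℝ) ^ ((Fin.last (n+5) : Fin (n+6)) + (Fin.castSucc (Fin.last (n+4)) : Fin (n+6)) : ℕ) *
        Bm (n+6) (Fin.last (n+5)) (Fin.castSucc (Fin.last (n+4))) *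
        Matrix.det ((Bm (n+6)).submatrix (Fin.last (n+5)).succAbove
          (Fin.castSucc (Fin.last (n+4))).succAbove) = - D (n+4) := by
    set p : Fin (n+6) := Fin.castSucc (Fin.last (n+4)) with hp
    have hpval : (p : ℕ) = n + 4 := rfl
    have hsign : (-1:Polynomial ℝ) ^ ((Fin.last (n+5) : Fin (n+6)) + p : ℕ) = -1 := by
      rw [hlast, hpval]; exact Odd.neg_one_pow ⟨n+4, by ring⟩
    have hent : Bm (n+6) (Fin.last (n+5)) p = -1 := by
      show ent (n+5) (p : ℕ) = -1
      rw [hpval, ent, if_neg (by omega), if_pos (by omega)]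
    have hp1 : p.succAbove (Fin.last (n+4)) = Fin.last (n+5) := by
      rw [Fin.succAbove, if_neg (lt_irrefl _), Fin.succ_last]
    have hp2 : ∀ j : Fin (n+4), p.succAbove (Fin.castSucc j) = Fin.castSucc (Fin.castSucc j) := by
      intro j
      rw [Fin.succAbove, if_pos]
      exact Fin.castSucc_lt_castSucc_iff.mpr (Fin.castSucc_lt_last j)
    rw [hsign, hent, hsA]
    set M : Matrix (Fin (n+5)) (Fin (n+5)) (Polynomial ℝ) :=
      (Bm (n+6)).submatrix Fin.castSucc p.succAbove with hM
    have hdetM : M.det = - D (n+4) := by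
      rw [Matrix.det_succ_column M (Fin.last (n+4)), Fin.sum_univ_castSucc]
      have hz2 : ∀ i : Fin (n+4),
          (-1:Polynomial ℝ) ^ ((Fin.castSucc i : Fin (n+5)) + (Fin.last (n+4) : Fin (n+5)) : ℕ) *
            M (Fin.castSucc i) (Fin.last (n+4)) *
            Matrix.det (M.submatrix (Fin.castSucc i).succAbove (Fin.last (n+4)).succAbove) = 0 := by
        intro i
        have : M (Fin.castSucc i) (Fin.last (n+4)) = 0 := by
          show Bm (n+6) (Fin.castSucc (Fin.castSucc i)) (p.succAbove (Fin.last (n+4))) = 0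
          rw [hp1]
          show ent ((Fin.castSucc (Fin.castSucc i) : Fin (n+6)) : ℕ) (n+5) = 0
          have hiv : ((Fin.castSucc (Fin.castSucc i) : Fin (n+6)) : ℕ) = (i : ℕ) := rfl
          rw [hiv]
          have := i.isLt
          apply ent_eq_zero <;> omega
        rw [this]; ring
      rw [Finset.sum_eq_zero (fun i _ => hz2 i), zero_add]
      have hsign2 : (-1:Polynomial ℝ) ^ ((Fin.last (n+4) : Fin (n+5)) + (Fin.last (n+4) : Fin (n+5)) : ℕ) = 1 :=
        Even.neg_one_pow ⟨n+4, rfl⟩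
      have hent2 : M (Fin.last (n+4)) (Fin.last (n+4)) = -1 := by
        show Bm (n+6) (Fin.castSucc (Fin.last (n+4))) (p.succAbove (Fin.last (n+4))) = -1
        rw [hp1]
        show ent (n+4) (n+5) = -1
        rw [ent, if_neg (by omega), if_pos (by omega)]
      have hmin : M.submatrix (Fin.last (n+4)).succAbove (Fin.last (n+4)).succAbove = Bm (n+4) := by
        rw [Fin.succAbove_last]
        refine Matrix.ext fun i j => ?_
        show Bm (n+6) (Fin.castSucc (Fin.castSucc i)) (p.succAbove (Fin.castSucc j)) = Bm (n+4) i j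
        rw [hp2]
        rfl
      rw [hsign2, hent2, hmin, one_mul, D]
      ring
    rw [hdetM]
    ring
  rw [hterm1, hterm2]
  ring

lemma Bm4 : Bm 4 = !![X, -1, 0, -1; -1, X, -1, 0; 0, -1, X, -1; -1, 0, -1, X] := by
  ext i j
  fin_cases i <;> fin_cases j <;> rfl

lemma detBm4 : D 4 = X^4 - C 4 * X^2 := by
  rw [D, Bm4, Matrix.det_succ_row_zero]
  simp [Fin.sum_univ_succ, Matrix.det_fin_three, Fin.succAbove]
  ring_nf
  simp [map_ofNat]

lemma Bm5 : Bm 5 = !![X, -1, 0, -1, 0; -1, X, -1, 0, 0; 0, -1, X, -1, 0; -1, 0, -1, X, -1; 0, 0, 0, -1, X] := by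
  ext i j
  fin_cases i <;> fin_cases j <;> rfl

lemma detBm5 : D 5 = X^5 - C 5 * X^3 + C 2 * X := by
  rw [D, Bm5]
  simp [Matrix.det_succ_row_zero, Fin.sum_univ_succ, Fin.succAbove]
  ring_nf
  simp [map_ofNat]

lemma D_coeffs (m : ℕ) :
    ((D (2*m+4)).coeff 0 = 0 ∧ (D (2*m+4)).coeff 1 = 0 ∧
      (D (2*m+4)).coeff 2 = (-1)^(m+1) * (2*(m:ℝ)+4)) ∧
    ((D (2*m+5)).coeff 0 = 0 ∧ (D (2*m+5)).coeff 1 = 2*(-1)^m) := by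
  induction m with
  | zero =>
    norm_num [detBm4, detBm5, coeff_X_pow, coeff_C_mul, coeff_X]
  | succ m ih =>
    obtain ⟨⟨h0, h1, h2⟩, hb0, hb1⟩ := ih
    have r1 : D (2*(m+1)+4) = X * D (2*m+5) - D (2*m+4) := by
      have := D_rec (2*m)
      have e1 : 2*(m+1)+4 = 2*m+6 := by ring
      rw [e1]; exact this
    have r2 : D (2*(m+1)+5) = X * D (2*(m+1)+4) - D (2*m+5) := by
      have := D_rec (2*m+1)
      have e1 : 2*(m+1)+5 = 2*m+1+6 := by ring
      have e2 : 2*(m+1)+4 = 2*m+1+5 := by ring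
      rw [e1, e2]; exact this
    have cX0 : ∀ p : Polynomial ℝ, (X * p).coeff 0 = 0 := by
      intro p; simp
    constructor
    · refine ⟨?_, ?_, ?_⟩
      · rw [r1, coeff_sub, h0, cX0, sub_zero]
      · rw [r1, coeff_sub, coeff_X_mul, hb0, h1, sub_zero]
      · rw [r1, coeff_sub, coeff_X_mul, hb1, h2]
        push_cast
        ring
    · constructor
      · rw [r2, coeff_sub, cX0, hb0, sub_zero]
      · rw [r2, coeff_sub, coeff_X_mul, r1, coeff_sub, cX0, h0, sub_zero, hb1]
        ring

/-- Entries of the adjacency matrix of the relabelled lollipop. -/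
def aent (i j : ℕ) : ℝ :=
  if i+1 = j ∨ j+1 = i ∨ (i = 0 ∧ j = 3) ∨ (i = 3 ∧ j = 0) then 1 else 0

/-- The adjacency matrix of the relabelled lollipop. -/
def Am (n : ℕ) : Matrix (Fin n) (Fin n) ℝ := Matrix.of fun i j => aent i j

/-- The relabelling equivalence. -/
def lolEquiv (k : ℕ) : (Fin 4 ⊕ Fin k) ≃ Fin (k+4) :=
  ((Fin.revPerm.sumCongr (Equiv.refl (Fin k))).trans finSumFinEquiv).trans (finCongr (by omega))

lemma lolEquiv_inl (k : ℕ) (i : Fin 4) : ((lolEquiv k (Sum.inl i)) : ℕ) = 3 - (i : ℕ) := by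
  simp [lolEquiv, Fin.rev]

lemma lolEquiv_inr (k : ℕ) (j : Fin k) : ((lolEquiv k (Sum.inr j)) : ℕ) = 4 + (j : ℕ) := by
  simp [lolEquiv]
  omega

lemma adj_entry (k : ℕ) [DecidableRel (lollipop 4 k).Adj] (a b : Fin 4 ⊕ Fin k) :
    (lollipop 4 k).adjMatrix ℝ a b = Am (k+4) (lolEquiv k a) (lolEquiv k b) := by
  rw [SimpleGraph.adjMatrix_apply]
  show _ = aent _ _
  rw [aent]
  refine if_congr ?_ rfl rfl
  rw [lollipop, SimpleGraph.fromRel_adj]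
  match a, b with
  | Sum.inl i, Sum.inl j =>
    rw [lolEquiv_inl, lolEquiv_inl]
    fin_cases i <;> fin_cases j <;> simp
  | Sum.inl i, Sum.inr j =>
    rw [lolEquiv_inl, lolEquiv_inr]
    have := j.isLt
    fin_cases i <;> simp <;> omega
  | Sum.inr j, Sum.inl i =>
    rw [lolEquiv_inl, lolEquiv_inr]
    have := j.isLt
    fin_cases i <;> simp <;> omega
  | Sum.inr i, Sum.inr j =>
    rw [lolEquiv_inr, lolEquiv_inr]
    have h : (Sum.inr i : Fin 4 ⊕ Fin k) ≠ Sum.inr j ↔ (i:ℕ) ≠ (j:ℕ) := by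
      simp [Fin.ext_iff]
    simp only [h]
    simp
    omega

lemma charpoly_eq (k : ℕ) : graphCharpoly (lollipop 4 k) = D (k+4) := by
  rw [graphCharpoly]
  letI := Classical.decRel (lollipop 4 k).Adj
  rw [← Matrix.charpoly_reindex (lolEquiv k)]
  have h1 : Matrix.reindex (lolEquiv k) (lolEquiv k) ((lollipop 4 k).adjMatrix ℝ) = Am (k+4) := by
    refine Matrix.ext fun i j => ?_
    rw [Matrix.reindex_apply, Matrix.submatrix_apply, adj_entry, Equiv.apply_symm_apply,
      Equiv.apply_symm_apply]
  rw [h1, Matrix.charpoly, D]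
  congr 1
  refine Matrix.ext fun i j => ?_
  show _ = ent (i : ℕ) (j : ℕ)
  by_cases hij : i = j
  · subst hij
    rw [Matrix.charmatrix_apply_eq]
    have : Am (k+4) i i = 0 := by
      show aent (i : ℕ) (i : ℕ) = 0
      rw [aent, if_neg (by omega)]
    rw [this, map_zero, sub_zero, ent, if_pos rfl]
  · rw [Matrix.charmatrix_apply_ne _ _ _ hij, ent, if_neg (fun h => hij (Fin.ext h))]
    show -C (aent (i : ℕ) (j : ℕ)) = _
    rw [aent]
    split_ifs <;> simp

end LollipopAux

/-- If `k` is even then `0` is a root of `Q_{L(4,k)}` of multiplicity at least `2`, and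
writing `Q_{L(4,k)}(X) = X²·R(X)` one has `R(0) = (−1)^{k/2+1}·(k+4)`. -/
theorem lollipop_four_charpoly_eval_zero (k : ℕ) (hk : Even k) :
    (Polynomial.X ^ 2 ∣ graphCharpoly (lollipop 4 k)) ∧
      ∀ R : Polynomial ℝ, graphCharpoly (lollipop 4 k) = Polynomial.X ^ 2 * R →
        R.eval 0 = (-1 : ℝ) ^ (k / 2 + 1) * ((k : ℝ) + 4) := by
  obtain ⟨m, hm⟩ := hk
  have hk2 : k = 2 * m := by omega
  subst hk2
  obtain ⟨⟨h0, h1, h2⟩, -⟩ := LollipopAux.D_coeffs m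
  have hQ : graphCharpoly (lollipop 4 (2*m)) = LollipopAux.D (2*m+4) :=
    LollipopAux.charpoly_eq (2*m)
  constructor
  · obtain ⟨q, hq⟩ := Polynomial.X_dvd_iff.mpr (hQ ▸ h0)
    have hq1 : q.coeff 0 = 0 := by
      have := congrArg (fun p => Polynomial.coeff p 1) hq
      simp only [Polynomial.coeff_X_mul] at this
      rw [hQ, h1] at this
      exact this.symm
    obtain ⟨r, hr⟩ := Polynomial.X_dvd_iff.mpr hq1
    exact ⟨r, by rw [hq, hr]; ring⟩
  · intro R hR
    have hc : (Polynomial.X ^ 2 * R).coeff 2 = R.coeff 0 := by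
      simpa using Polynomial.coeff_X_pow_mul R 2 0
    have hm2 : 2 * m / 2 = m := by omega
    rw [← Polynomial.coeff_zero_eq_eval_zero, ← hc, ← hR, hQ, h2, hm2]
    push_cast
    ring
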